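/- arXiv:1602.04097 — 5 statements merged into one kernel-verified Lean document; each statement's English description precedes it below -/
import Mathlib

section
/- Let L : ℝ² → ℝ be a nonzero linear form, let κ > 1 be real, and let T ≥ κ / (√2 · (κ-1)^{1/4}). Then there exists a nonzero integer vector u ∈ ℤ² such that ‖u‖ ≤ T (euclidean norm) and |L(u)| ≤ κ‖L‖ / T, where ‖L‖ is the euclidean norm of the coefficient vector of L. -/
open MeasureTheory Set Submodule
open scoped ENNReal

private lemma hex_key (κ T w a : ℝ) (hκ : 1 < κ) (hT0 : 0 < T) (hw0 : 0 < w)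
    (hwT : w * T = κ) (hA : κ ^ 4 ≤ 4 * (κ - 1) * T ^ 4)
    (ha0 : 0 ≤ a) (ha2 : a ^ 2 = T ^ 2 - w ^ 2) : 2 ≤ w * (T + a) := by
  have hA2 : (w * T) ^ 4 ≤ 4 * (w * T - 1) * T ^ 4 := by rw [hwT]; exact hA
  have hA3 : w ^ 4 + 4 ≤ 4 * w * T := by nlinarith [hA2, pow_pos hT0 4]
  rcases le_or_gt (2 - w * T) 0 with h | h
  · nlinarith [mul_nonneg hw0.le ha0]
  · have haa : (w * a) ^ 2 = w ^ 2 * T ^ 2 - w ^ 4 := by rw [mul_pow, ha2]; ring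
    have hsq : (2 - w * T) ^ 2 ≤ (w * a) ^ 2 := by nlinarith [hA3, haa]
    have : 2 - w * T ≤ w * a := by nlinarith [hsq, mul_nonneg hw0.le ha0, h]
    nlinarith [this]

private lemma hex_contain (T w a m x y : ℝ) (hT0 : 0 < T) (hw0 : 0 < w) (ha0 : 0 ≤ a)
    (ha2 : a ^ 2 = T ^ 2 - w ^ 2) (hm0 : 0 ≤ m) (hmw : m * w = T - a)
    (hx : |x| + m * |y| ≤ T) (hy : |y| ≤ w) : y ^ 2 + x ^ 2 ≤ T ^ 2 := by
  have ht0 : 0 ≤ |y| := abs_nonneg y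
  have hxb : |x| ≤ T - m * |y| := by linarith
  have h0 : 0 ≤ T - m * |y| := le_trans (abs_nonneg x) hxb
  have hx2 : x ^ 2 ≤ (T - m * |y|) ^ 2 := by nlinarith [abs_nonneg x, sq_abs x]
  have hident : (m * w) ^ 2 + w ^ 2 = 2 * T * (m * w) := by rw [hmw]; nlinarith [ha2]
  have hmw1 : (m ^ 2 + 1) * w = 2 * T * m := by
    have hw' : ((m ^ 2 + 1) * w) * w = (2 * T * m) * w := by nlinarith [hident]
    exact mul_right_cancel₀ hw0.ne' hw'
  nlinarith [hx2, hy, ht0, hm0, sq_abs y,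
    mul_nonneg (mul_nonneg (by positivity : (0:ℝ) ≤ m ^ 2 + 1) ht0) (sub_nonneg.mpr hy),
    mul_le_mul_of_nonneg_left hy (mul_nonneg (by positivity : (0:ℝ) ≤ m ^ 2 + 1) ht0),
    hmw1]

private lemma hex_volume (T w m : ℝ) (hw0 : 0 < w) (hm0 : 0 ≤ m) (hTm : 0 ≤ T - m * w) :
    ENNReal.ofReal (4 * T * w - 2 * m * w ^ 2) ≤
      volume {p : Fin 2 → ℝ | |p 1| + m * |p 0| ≤ T ∧ |p 0| ≤ w} := by
  set A : Set (ℝ × ℝ) := {z | |z.2| + m * |z.1| ≤ T ∧ |z.1| ≤ w} with hA_def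
  have hAclosed : IsClosed A := by
    apply IsClosed.inter
    · exact isClosed_le (continuous_snd.abs.add (continuous_const.mul continuous_fst.abs))
        continuous_const
    · exact isClosed_le continuous_fst.abs continuous_const
  have hHA : volume {p : Fin 2 → ℝ | |p 1| + m * |p 0| ≤ T ∧ |p 0| ≤ w} = volume A := by
    rw [← (volume_preserving_finTwoArrow ℝ).measure_preimage
      hAclosed.measurableSet.nullMeasurableSet]
    rfl
  rw [hHA]
  set f : ℝ → ℝ := fun y => -(T - m * |y|) with hf_def
  set g : ℝ → ℝ := fun y => T - m * |y| with hg_def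
  have hfc : Continuous f := (continuous_const.sub (continuous_const.mul continuous_abs)).neg
  have hgc : Continuous g := continuous_const.sub (continuous_const.mul continuous_abs)
  have hsub : regionBetween f g (Ioo (-w) w) ⊆ A := by
    rintro ⟨y, x⟩ ⟨hy, hx⟩
    simp only [mem_Ioo] at hy hx
    constructor
    · have h1 : |x| < T - m * |y| := by
        rw [abs_lt]; constructor
        · have := hx.1; simp only [f] at this; linarith
        · have := hx.2; simp only [g] at this; linarith
      simp only [hA_def, mem_setOf_eq]
      linarith
    · have : |y| < w := abs_lt.mpr ⟨hy.1, hy.2⟩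
      linarith
  have hreg : volume (regionBetween f g (Ioo (-w) w)) =
      ENNReal.ofReal (∫ y in Ioo (-w) w, (g - f) y) := by
    rw [Measure.volume_eq_prod]
    apply volume_regionBetween_eq_integral
    · exact (hfc.integrableOn_Icc).mono_set Ioo_subset_Icc_self
    · exact (hgc.integrableOn_Icc).mono_set Ioo_subset_Icc_self
    · exact measurableSet_Ioo
    · intro y hy
      have hyw : |y| ≤ w := le_of_lt (abs_lt.mpr ⟨(mem_Ioo.mp hy).1, (mem_Ioo.mp hy).2⟩)
      have h1 : m * |y| ≤ m * w := mul_le_mul_of_nonneg_left hyw hm0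
      simp only [f, g]
      linarith
  have hint : ∫ y in Ioo (-w) w, (g - f) y = 4 * T * w - 2 * m * w ^ 2 := by
    have hgf : (fun y => (g - f) y) = fun y => 2 * T - 2 * m * |y| := by
      funext y; simp only [Pi.sub_apply, f, g]; ring
    rw [hgf, ← MeasureTheory.integral_Ioc_eq_integral_Ioo,
        ← intervalIntegral.integral_of_le (by linarith : -w ≤ w)]
    have habs : ∫ y in (-w)..w, |y| = w ^ 2 := by
      have i1 : IntervalIntegrable (fun y : ℝ => |y|) volume (-w) 0 :=
        continuous_abs.intervalIntegrable _ _
      have i2 : IntervalIntegrable (fun y : ℝ => |y|) volume 0 w :=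
        continuous_abs.intervalIntegrable _ _
      rw [← intervalIntegral.integral_add_adjacent_intervals i1 i2]
      have e1 : ∫ y in (-w)..(0:ℝ), |y| = w ^ 2 / 2 := by
        have heq : ∫ y in (-w)..(0:ℝ), |y| = ∫ y in (-w)..(0:ℝ), -y :=
          intervalIntegral.integral_congr (fun y hy => by
            rw [Set.uIcc_of_le (by linarith : -w ≤ (0:ℝ))] at hy
            exact abs_of_nonpos hy.2)
        rw [heq, intervalIntegral.integral_neg, integral_id]; ring
      have e2 : ∫ y in (0:ℝ)..w, |y| = w ^ 2 / 2 := by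
        have heq : ∫ y in (0:ℝ)..w, |y| = ∫ y in (0:ℝ)..w, y :=
          intervalIntegral.integral_congr (fun y hy => by
            rw [Set.uIcc_of_le (by linarith : (0:ℝ) ≤ w)] at hy
            exact abs_of_nonneg hy.1)
        rw [heq, integral_id]; ring
      rw [e1, e2]; ring
    rw [intervalIntegral.integral_sub (f := fun _ => 2 * T) (g := fun y => 2 * m * |y|)
      intervalIntegrable_const
      ((continuous_const.mul continuous_abs).intervalIntegrable _ _)]
    have h2 : ∫ y in (-w)..w, 2 * m * |y| = 2 * m * w ^ 2 := by
      rw [intervalIntegral.integral_const_mul, habs]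
    rw [h2, intervalIntegral.integral_const]
    simp [smul_eq_mul]; ring
  calc ENNReal.ofReal (4 * T * w - 2 * m * w ^ 2)
      = volume (regionBetween f g (Ioo (-w) w)) := by rw [hreg, hint]
    _ ≤ volume A := measure_mono hsub

set_option maxHeartbeats 1000000 in
/-- Geometry of numbers lemma: given a nonzero linear form `L` on `ℝ²` with coefficient
vector `c`, `κ > 1` and `T ≥ κ / (√2 (κ-1)^{1/4})`, there is a nonzero integer vector `u`
with euclidean norm `≤ T` and `|L(u)| ≤ κ‖L‖/T`. -/
theorem stmt_0 (c : Fin 2 → ℝ) (hc : c ≠ 0) (κ T : ℝ) (hκ : 1 < κ)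
    (hT : κ / (Real.sqrt 2 * (κ - 1) ^ ((1 : ℝ) / 4)) ≤ T) :
    ∃ u : Fin 2 → ℤ, u ≠ 0 ∧
      Real.sqrt ((u 0 : ℝ) ^ 2 + (u 1 : ℝ) ^ 2) ≤ T ∧
      |c 0 * (u 0 : ℝ) + c 1 * (u 1 : ℝ)| ≤ κ * Real.sqrt (c 0 ^ 2 + c 1 ^ 2) / T := by
  classical
  -- basic positivity facts
  have hc01 : c 0 ≠ 0 ∨ c 1 ≠ 0 := by
    by_contra h
    push_neg at h
    exact hc (funext fun i => by fin_cases i <;> simp [h.1, h.2])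
  have hc2 : 0 < c 0 ^ 2 + c 1 ^ 2 := by
    rcases hc01 with h | h
    · have : 0 < c 0 ^ 2 := by rw [sq]; exact mul_self_pos.mpr h
      nlinarith [sq_nonneg (c 1)]
    · have : 0 < c 1 ^ 2 := by rw [sq]; exact mul_self_pos.mpr h
      nlinarith [sq_nonneg (c 0)]
  set n := Real.sqrt (c 0 ^ 2 + c 1 ^ 2) with hn_def
  have hn : 0 < n := Real.sqrt_pos.mpr hc2
  have hn2 : n ^ 2 = c 0 ^ 2 + c 1 ^ 2 := Real.sq_sqrt hc2.le
  have hκ0 : 0 < κ := lt_trans one_pos hκ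
  have hden : 0 < Real.sqrt 2 * (κ - 1) ^ ((1 : ℝ) / 4) :=
    mul_pos (Real.sqrt_pos.mpr (by norm_num)) (Real.rpow_pos_of_pos (by linarith) _)
  have hT0 : 0 < T := lt_of_lt_of_le (div_pos hκ0 hden) hT
  have hA : κ ^ 4 ≤ 4 * (κ - 1) * T ^ 4 := by
    have h1 : κ ≤ T * (Real.sqrt 2 * (κ - 1) ^ ((1 : ℝ) / 4)) := (div_le_iff₀ hden).mp hT
    have e1 : Real.sqrt 2 ^ 4 = 4 := by
      have h2 : Real.sqrt 2 ^ 2 = 2 := Real.sq_sqrt (by norm_num)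
      nlinarith [h2]
    have e2 : ((κ - 1) ^ ((1 : ℝ) / 4)) ^ (4 : ℕ) = κ - 1 := by
      rw [← Real.rpow_natCast ((κ - 1) ^ ((1 : ℝ) / 4)) 4,
        ← Real.rpow_mul (by linarith : (0 : ℝ) ≤ κ - 1)]
      norm_num
    have h2 : (Real.sqrt 2 * (κ - 1) ^ ((1 : ℝ) / 4)) ^ 4 = 4 * (κ - 1) := by
      rw [mul_pow, e1, e2]
    calc κ ^ 4 ≤ (T * (Real.sqrt 2 * (κ - 1) ^ ((1 : ℝ) / 4))) ^ 4 :=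
          pow_le_pow_left₀ hκ0.le h1 4
      _ = T ^ 4 * (4 * (κ - 1)) := by rw [mul_pow, h2]
      _ = 4 * (κ - 1) * T ^ 4 := by ring
  obtain ⟨w, hw0, hwT⟩ : ∃ w, 0 < w ∧ w * T = κ :=
    ⟨κ / T, div_pos hκ0 hT0, div_mul_cancel₀ _ hT0.ne'⟩
  have h24 : κ ^ 2 ≤ T ^ 4 := by nlinarith [hA, sq_nonneg (κ * (κ - 2)), hκ0]
  have hκT2 : κ ≤ T ^ 2 := by nlinarith [h24, hκ0, sq_nonneg T, sq_nonneg (κ - T ^ 2)]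
  have hwle : w ≤ T := by nlinarith [hwT, hκT2, hT0]
  set a := Real.sqrt (T ^ 2 - w ^ 2) with ha_def
  have ha0 : 0 ≤ a := Real.sqrt_nonneg _
  have ha2 : a ^ 2 = T ^ 2 - w ^ 2 := Real.sq_sqrt (by nlinarith)
  have haT : a ≤ T := by nlinarith [ha2, ha0, hw0]
  obtain ⟨m, hm0, hmw⟩ : ∃ m, 0 ≤ m ∧ m * w = T - a :=
    ⟨(T - a) / w, div_nonneg (by linarith) hw0.le, div_mul_cancel₀ _ hw0.ne'⟩
  have hkey : 2 ≤ w * (T + a) := hex_key κ T w a hκ hT0 hw0 hwT hA ha0 ha2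
  -- the hexagon
  set H : Set (Fin 2 → ℝ) := {p | |p 1| + m * |p 0| ≤ T ∧ |p 0| ≤ w} with hH_def
  have hHconv : Convex ℝ H := by
    intro p hp q hq α β hα hβ hαβ
    have e0 : |(α • p + β • q) 0| ≤ α * |p 0| + β * |q 0| := by
      simp only [Pi.add_apply, Pi.smul_apply, smul_eq_mul]
      calc |α * p 0 + β * q 0| ≤ |α * p 0| + |β * q 0| := abs_add_le _ _
        _ = α * |p 0| + β * |q 0| := by
            rw [abs_mul, abs_mul, abs_of_nonneg hα, abs_of_nonneg hβ]
    have e1 : |(α • p + β • q) 1| ≤ α * |p 1| + β * |q 1| := by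
      simp only [Pi.add_apply, Pi.smul_apply, smul_eq_mul]
      calc |α * p 1 + β * q 1| ≤ |α * p 1| + |β * q 1| := abs_add_le _ _
        _ = α * |p 1| + β * |q 1| := by
            rw [abs_mul, abs_mul, abs_of_nonneg hα, abs_of_nonneg hβ]
    constructor
    · calc |(α • p + β • q) 1| + m * |(α • p + β • q) 0|
          ≤ (α * |p 1| + β * |q 1|) + m * (α * |p 0| + β * |q 0|) := by
            exact add_le_add e1 (mul_le_mul_of_nonneg_left e0 hm0)
        _ = α * (|p 1| + m * |p 0|) + β * (|q 1| + m * |q 0|) := by ring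
        _ ≤ α * T + β * T :=
            add_le_add (mul_le_mul_of_nonneg_left hp.1 hα)
              (mul_le_mul_of_nonneg_left hq.1 hβ)
        _ = T := by rw [← add_mul, hαβ, one_mul]
    · calc |(α • p + β • q) 0| ≤ α * |p 0| + β * |q 0| := e0
        _ ≤ α * w + β * w :=
            add_le_add (mul_le_mul_of_nonneg_left hp.2 hα)
              (mul_le_mul_of_nonneg_left hq.2 hβ)
        _ = w := by rw [← add_mul, hαβ, one_mul]
  have hHsymm : ∀ x ∈ H, -x ∈ H := by
    intro x hx
    refine ⟨?_, ?_⟩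
    · simpa only [Pi.neg_apply, abs_neg] using hx.1
    · simpa only [Pi.neg_apply, abs_neg] using hx.2
  have hHclosed : IsClosed H := by
    apply IsClosed.inter
    · exact isClosed_le ((continuous_apply 1).abs.add
        (continuous_const.mul (continuous_apply 0).abs)) continuous_const
    · exact isClosed_le (continuous_apply 0).abs continuous_const
  have hHcpt : IsCompact H := by
    refine IsCompact.of_isClosed_subset
      (isCompact_Icc (a := fun _ : Fin 2 => -(T + w)) (b := fun _ => T + w)) hHclosed ?_
    · intro p hp
      rw [Set.mem_Icc]
      have h1 : |p 1| ≤ T := by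
        have := hp.1
        nlinarith [mul_nonneg hm0 (abs_nonneg (p 0))]
      have h2 := abs_le.mp h1
      have h3 := abs_le.mp hp.2
      constructor <;> intro i <;> fin_cases i
      · show -(T + w) ≤ p 0
        linarith [hT0.le]
      · show -(T + w) ≤ p 1
        linarith [hw0.le]
      · show p 0 ≤ T + w
        linarith [hT0.le]
      · show p 1 ≤ T + w
        linarith [hw0.le]
  have hvol4 : (4 : ℝ≥0∞) ≤ volume H := by
    refine le_trans ?_ (hex_volume T w m hw0 hm0 (by linarith [hmw, ha0]))
    rw [show (4 : ℝ≥0∞) = ENNReal.ofReal 4 by norm_num]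
    exact ENNReal.ofReal_le_ofReal (by nlinarith [hkey, hmw, hw0])
  -- the rotation
  set M : Matrix (Fin 2) (Fin 2) ℝ := !![c 0 / n, -(c 1 / n); c 1 / n, c 0 / n] with hM_def
  set ρ : (Fin 2 → ℝ) →ₗ[ℝ] (Fin 2 → ℝ) := Matrix.toLin' M with hρ_def
  have hdet : LinearMap.det ρ = 1 := by
    rw [hρ_def, LinearMap.det_toLin', hM_def, Matrix.det_fin_two_of]
    field_simp
    nlinarith [hn2]
  have hvols : volume (ρ '' H) = volume H := by
    rw [Measure.addHaar_image_linearMap, hdet]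
    simp
  have hρ0 : ∀ p : Fin 2 → ℝ, ρ p 0 = c 0 / n * p 0 - c 1 / n * p 1 := by
    intro p
    simp [hρ_def, hM_def, Matrix.toLin'_apply, Matrix.mulVec, dotProduct,
      Fin.sum_univ_two]
    ring
  have hρ1 : ∀ p : Fin 2 → ℝ, ρ p 1 = c 1 / n * p 0 + c 0 / n * p 1 := by
    intro p
    simp [hρ_def, hM_def, Matrix.toLin'_apply, Matrix.mulVec, dotProduct,
      Fin.sum_univ_two]
  -- Minkowski
  have fund := ZSpan.isAddFundamentalDomain' (Pi.basisFun ℝ (Fin 2)) volume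
  have hcnt : Countable (span ℤ (Set.range (Pi.basisFun ℝ (Fin 2)))).toAddSubgroup := by
    change Countable (span ℤ (Set.range (Pi.basisFun ℝ (Fin 2))))
    infer_instance
  have hμF : volume (ZSpan.fundamentalDomain (Pi.basisFun ℝ (Fin 2))) = 1 := by
    rw [ZSpan.fundamentalDomain_pi_basisFun, volume_pi, Measure.pi_pi]
    simp [Real.volume_Ico]
  have hfr : Module.finrank ℝ (Fin 2 → ℝ) = 2 := by simp
  have hcond : volume (ZSpan.fundamentalDomain (Pi.basisFun ℝ (Fin 2))) *
      2 ^ Module.finrank ℝ (Fin 2 → ℝ) ≤ volume (ρ '' H) := by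
    rw [hμF, one_mul, hfr, hvols]
    calc (2 : ℝ≥0∞) ^ 2 = 4 := by norm_num
      _ ≤ volume H := hvol4
  have hsymm' : ∀ x ∈ ρ '' H, -x ∈ ρ '' H := by
    rintro x ⟨p, hp, rfl⟩
    exact ⟨-p, hHsymm p hp, by simp [map_neg]⟩
  have hconv' : Convex ℝ (ρ '' H) := hHconv.linear_image ρ
  have hcpt' : IsCompact (ρ '' H) := hHcpt.image ρ.continuous_of_finiteDimensional
  obtain ⟨x, hx0, hxs⟩ := exists_ne_zero_mem_lattice_of_measure_mul_two_pow_le_measure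
    fund hsymm' hconv' hcpt' hcond
  -- extract integer coordinates
  have hxmem : (x : Fin 2 → ℝ) ∈ span ℤ (Set.range (Pi.basisFun ℝ (Fin 2))) :=
    (Submodule.mem_toAddSubgroup _).mp x.2
  have hrep := fun i => ((Pi.basisFun ℝ (Fin 2)).mem_span_iff_repr_mem ℤ _).mp hxmem i
  simp only [Pi.basisFun_repr, Set.mem_range, algebraMap_int_eq, eq_intCast] at hrep
  choose u hu using hrep
  obtain ⟨p, hp, hρp⟩ := hxs
  have hv0 : (x : Fin 2 → ℝ) 0 = c 0 / n * p 0 - c 1 / n * p 1 := by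
    rw [← hρp]; exact hρ0 p
  have hv1 : (x : Fin 2 → ℝ) 1 = c 1 / n * p 0 + c 0 / n * p 1 := by
    rw [← hρp]; exact hρ1 p
  have hpT : p 0 ^ 2 + p 1 ^ 2 ≤ T ^ 2 :=
    hex_contain T w a m (p 1) (p 0) hT0 hw0 ha0 ha2 hm0 hmw hp.1 hp.2
  refine ⟨u, ?_, ?_, ?_⟩
  · intro h
    apply hx0
    have hxz : (x : Fin 2 → ℝ) = 0 := by
      funext i
      rw [← hu i, h]
      simp
    exact Subtype.ext hxz
  · rw [hu 0, hu 1]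
    have hsum : (x : Fin 2 → ℝ) 0 ^ 2 + (x : Fin 2 → ℝ) 1 ^ 2 = p 0 ^ 2 + p 1 ^ 2 := by
      rw [hv0, hv1]
      field_simp
      nlinarith [hn2]
    rw [hsum]
    calc Real.sqrt (p 0 ^ 2 + p 1 ^ 2) ≤ Real.sqrt (T ^ 2) := Real.sqrt_le_sqrt hpT
      _ = T := Real.sqrt_sq hT0.le
  · rw [hu 0, hu 1]
    have hform : c 0 * (x : Fin 2 → ℝ) 0 + c 1 * (x : Fin 2 → ℝ) 1 = n * p 0 := by
      rw [hv0, hv1]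
      field_simp
      linear_combination (-(p 0)) * hn2
    rw [hform, abs_mul, abs_of_nonneg hn.le]
    calc n * |p 0| ≤ n * w := mul_le_mul_of_nonneg_left hp.2 hn.le
      _ = κ * n / T := by
          rw [← hwT]
          field_simp
end

section
/- For every positive integer n with n ≥ 2, the absolute value of the n-th cyclotomic polynomial evaluated at 2 satisfies |Φ_n(2)| > 5^{φ(n)/4}, where φ is Euler's totient function. -/
open Polynomial Finset ArithmeticFunction
open scoped ArithmeticFunction.Moebius

noncomputable def F (m : ℕ) : ℝ := (cyclotomic m ℝ).eval 2

lemma F_ge_one (m : ℕ) : 1 ≤ F m := by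
  have := Polynomial.sub_one_pow_totient_le_cyclotomic_eval (q := (2:ℝ)) (by norm_num) m
  norm_num at this; simpa [F] using this

lemma F_prod (n : ℕ) (hn : 0 < n) :
    ∏ i ∈ n.divisors, F i = 2 ^ n - 1 := by
  have h := prod_cyclotomic_eq_X_pow_sub_one hn ℝ
  have := congrArg (Polynomial.eval (2:ℝ)) h
  simpa [F, eval_prod] using this

lemma F_moebius (n : ℕ) (hn : 0 < n) :
    F n = ∏ x ∈ n.divisorsAntidiagonal, ((2:ℝ) ^ x.2 - 1) ^ (μ x.1) := by
  have key := (prod_eq_iff_prod_pow_moebius_eq_of_nonzero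
      (f := F) (g := fun m => (2:ℝ) ^ m - 1)
      (fun m hm => by have := F_ge_one m; positivity)
      (fun m hm => by
        have : (1:ℝ) < 2 ^ m := one_lt_pow₀ (by norm_num) hm.ne'
        intro h; nlinarith)).mp (fun m hm => F_prod m hm) n hn
  exact key.symm

lemma totient_moebius (n : ℕ) (hn : 0 < n) :
    ∑ x ∈ n.divisorsAntidiagonal, (μ x.1) * (x.2 : ℤ) = (n.totient : ℤ) := by
  have key := (sum_eq_iff_sum_mul_moebius_eq (R := ℤ)
      (f := fun m => (m.totient : ℤ)) (g := fun m => (m : ℤ))).mp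
      (fun m hm => by exact_mod_cast Nat.sum_totient m) n hn
  exact key

lemma prod_two_zpow {ι : Type*} (s : Finset ι) (k : ι → ℤ) :
    ∏ i ∈ s, (2:ℝ) ^ (k i) = 2 ^ (∑ i ∈ s, k i) := by
  induction s using Finset.cons_induction with
  | empty => simp
  | cons a s ha ih => rw [Finset.prod_cons, Finset.sum_cons, ih, zpow_add₀ (by norm_num)]

noncomputable def u (e : ℕ) : ℝ := ((2:ℝ) ^ e)⁻¹

lemma one_sub_sum_le_prod {ι : Type*} (s : Finset ι) (f : ι → ℝ)
    (h0 : ∀ i ∈ s, 0 ≤ f i) (h1 : ∀ i ∈ s, f i ≤ 1) :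
    1 - ∑ i ∈ s, f i ≤ ∏ i ∈ s, (1 - f i) := by
  induction s using Finset.cons_induction with
  | empty => simp
  | cons a s ha ih =>
    rw [Finset.prod_cons, Finset.sum_cons]
    have ihs := ih (fun i hi => h0 i (Finset.mem_cons_of_mem hi))
      (fun i hi => h1 i (Finset.mem_cons_of_mem hi))
    have ha0 : 0 ≤ f a := h0 a (Finset.mem_cons_self a s)
    have ha1 : f a ≤ 1 := h1 a (Finset.mem_cons_self a s)
    have hsum : 0 ≤ ∑ i ∈ s, f i :=
      Finset.sum_nonneg fun i hi => h0 i (Finset.mem_cons_of_mem hi)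
    nlinarith [mul_le_mul_of_nonneg_left ihs (by linarith : (0:ℝ) ≤ 1 - f a)]

lemma sum_u_Icc_le (a n : ℕ) : ∑ e ∈ Finset.Icc a n, u e ≤ 2 * (1/2:ℝ) ^ a := by
  have hu : ∀ e, u e = (1/2:ℝ) ^ e := by intro e; simp [u, inv_pow, one_div]
  simp only [hu]
  rcases le_or_gt a (n+1) with h | h
  · rw [← Finset.Ico_add_one_right_eq_Icc]
    rw [geom_sum_Ico' (by norm_num : (1/2:ℝ) ≠ 1) h]
    have h1 : (0:ℝ) ≤ (1/2)^(n+1) := by positivity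
    rw [div_le_iff₀ (by norm_num : (0:ℝ) < 1 - 1/2 )]
    nlinarith
  · rw [Finset.Icc_eq_empty (by omega)]
    simp only [Finset.sum_empty]; positivity

lemma sum_h_le (n : ℕ) (hn : 0 < n) :
    ∑ x ∈ n.divisorsAntidiagonal, (if μ x.1 = 1 then u x.2 else 0) ≤ 17/32 := by
  rw [Nat.sum_divisorsAntidiagonal' (f := fun d e => if μ d = 1 then u e else 0)]
  rw [← Finset.sum_filter]
  have hu0 : ∀ e : ℕ, 0 ≤ u e := fun e => by unfold u; positivity
  by_cases hμ : μ n = 1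
  · have hsq : Squarefree n := moebius_ne_zero_iff_squarefree.mp (by rw [hμ]; norm_num)
    have hsub : {e ∈ n.divisors | μ (n / e) = 1} ⊆ insert 1 (Finset.Icc 6 n) := by
      intro e hemem
      obtain ⟨hed, hμe⟩ := Finset.mem_filter.mp hemem
      obtain ⟨hdvd, -⟩ := Nat.mem_divisors.mp hed
      have epos : 0 < e := Nat.pos_of_mem_divisors hed
      have elen : e ≤ n := Nat.le_of_dvd hn hdvd
      rcases eq_or_ne e 1 with rfl | he1
      · exact Finset.mem_insert_self _ _
      · have hmul : e * (n / e) = n := Nat.mul_div_cancel' hdvd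
        have hsqm : Squarefree (e * (n / e)) := by rw [hmul]; exact hsq
        obtain ⟨cop, sqe, -⟩ := Nat.squarefree_mul_iff.mp hsqm
        have hme : μ e * μ (n / e) = 1 := by
          rw [← isMultiplicative_moebius.map_mul_of_coprime cop, hmul, hμ]
        rw [hμe, mul_one] at hme
        have h6 : 6 ≤ e := by
          by_contra hcon
          push_neg at hcon
          interval_cases e
          · exact he1 rfl
          · rw [moebius_apply_prime Nat.prime_two] at hme; norm_num at hme
          · rw [moebius_apply_prime Nat.prime_three] at hme; norm_num at hme
          · exact absurd sqe (by decide)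
          · rw [moebius_apply_prime (by norm_num)] at hme; norm_num at hme
        exact Finset.mem_insert_of_mem (Finset.mem_Icc.mpr ⟨h6, elen⟩)
    calc ∑ e ∈ {e ∈ n.divisors | μ (n / e) = 1}, u e
        ≤ ∑ e ∈ insert 1 (Finset.Icc 6 n), u e :=
          Finset.sum_le_sum_of_subset_of_nonneg hsub (fun i _ _ => hu0 i)
      _ = u 1 + ∑ e ∈ Finset.Icc 6 n, u e := Finset.sum_insert (by simp)
      _ ≤ 1/2 + 2 * (1/2:ℝ)^6 := by
          have := sum_u_Icc_le 6 n
          have hu1 : u 1 = 1/2 := by norm_num [u]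
          linarith
      _ ≤ 17/32 := by norm_num
  · have hsub : {e ∈ n.divisors | μ (n / e) = 1} ⊆ Finset.Icc 2 n := by
      intro e hemem
      obtain ⟨hed, hμe⟩ := Finset.mem_filter.mp hemem
      obtain ⟨hdvd, -⟩ := Nat.mem_divisors.mp hed
      have epos : 0 < e := Nat.pos_of_mem_divisors hed
      have elen : e ≤ n := Nat.le_of_dvd hn hdvd
      have he1 : e ≠ 1 := by rintro rfl; rw [Nat.div_one] at hμe; exact hμ hμe
      exact Finset.mem_Icc.mpr ⟨by omega, elen⟩
    calc ∑ e ∈ {e ∈ n.divisors | μ (n / e) = 1}, u e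
        ≤ ∑ e ∈ Finset.Icc 2 n, u e :=
          Finset.sum_le_sum_of_subset_of_nonneg hsub (fun i _ _ => hu0 i)
      _ ≤ 2 * (1/2:ℝ)^2 := sum_u_Icc_le 2 n
      _ ≤ 17/32 := by norm_num

lemma F_lower (n : ℕ) (hn : 0 < n) : (15/32 : ℝ) * 2 ^ n.totient ≤ F n := by
  have hfac : ∀ x ∈ n.divisorsAntidiagonal, ((2:ℝ)^x.2 - 1)^(μ x.1)
      = ((2:ℝ)^x.2)^(μ x.1) * (1 - u x.2)^(μ x.1) := by
    intro x hx
    rw [← mul_zpow]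
    congr 1
    have h2 : ((2:ℝ)^x.2) ≠ 0 := by positivity
    field_simp [u]
    rw [u, mul_sub, mul_one, mul_inv_cancel₀ h2]
  rw [F_moebius n hn, Finset.prod_congr rfl hfac, Finset.prod_mul_distrib]
  have hA : ∏ x ∈ n.divisorsAntidiagonal, ((2:ℝ)^x.2)^(μ x.1) = 2 ^ n.totient := by
    have h1 : ∀ x ∈ n.divisorsAntidiagonal,
        ((2:ℝ)^x.2)^(μ x.1) = (2:ℝ)^((μ x.1) * (x.2:ℤ)) := by
      intro x hx
      rw [← zpow_natCast (2:ℝ) x.2, ← zpow_mul, mul_comm]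
    rw [Finset.prod_congr rfl h1, prod_two_zpow, totient_moebius n hn, zpow_natCast]
  rw [hA]
  -- bounds on the factors
  have hub : ∀ x ∈ n.divisorsAntidiagonal, 0 ≤ u x.2 ∧ u x.2 ≤ 1/2 := by
    intro x hx
    have hx2 : 0 < x.2 := Nat.pos_of_mem_divisors (Nat.snd_mem_divisors_of_mem_antidiagonal hx)
    constructor
    · unfold u; positivity
    · have h2 : (2:ℝ) ≤ 2 ^ x.2 := by
        calc (2:ℝ) = 2^1 := (pow_one 2).symm
        _ ≤ 2 ^ x.2 := pow_le_pow_right₀ (by norm_num) hx2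
      have : ((2:ℝ)^x.2)⁻¹ ≤ 2⁻¹ := by
        apply inv_anti₀ (by norm_num) h2
      simpa [u] using this
  have step1 : ∀ x ∈ n.divisorsAntidiagonal,
      (1 - (if μ x.1 = 1 then u x.2 else 0)) ≤ (1 - u x.2)^(μ x.1) := by
    intro x hx
    obtain ⟨hu0, hu1⟩ := hub x hx
    have hb0 : (0:ℝ) < 1 - u x.2 := by linarith
    have hb1 : 1 - u x.2 ≤ 1 := by linarith
    by_cases h1 : μ x.1 = 1
    · simp [h1]
    · rw [if_neg h1, sub_zero]
      have habs := abs_moebius_le_one (n := x.1)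
      rw [abs_le] at habs
      have : μ x.1 = -1 ∨ μ x.1 = 0 := by omega
      rcases this with h | h <;> rw [h]
      · rw [zpow_neg_one]
        rw [le_inv_comm₀ one_pos hb0]
        simpa using hb1
      · simp
  have step2 : ∏ x ∈ n.divisorsAntidiagonal, (1 - (if μ x.1 = 1 then u x.2 else 0))
      ≤ ∏ x ∈ n.divisorsAntidiagonal, (1 - u x.2)^(μ x.1) := by
    apply Finset.prod_le_prod
    · intro x hx
      obtain ⟨hu0, hu1⟩ := hub x hx
      split <;> linarith
    · exact step1
  have step3 := one_sub_sum_le_prod n.divisorsAntidiagonal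
      (fun x => if μ x.1 = 1 then u x.2 else 0)
      (fun x hx => by obtain ⟨hu0, hu1⟩ := hub x hx; split <;> linarith)
      (fun x hx => by obtain ⟨hu0, hu1⟩ := hub x hx; split <;> linarith)
  have step4 := sum_h_le n hn
  have hT : (15/32:ℝ) ≤ ∏ x ∈ n.divisorsAntidiagonal, (1 - u x.2)^(μ x.1) := by
    refine le_trans ?_ (le_trans step3 step2)
    linarith
  have h2pos : (0:ℝ) < 2 ^ n.totient := by positivity
  calc (15/32:ℝ) * 2 ^ n.totient = 2 ^ n.totient * (15/32) := by ring
    _ ≤ 2 ^ n.totient * ∏ x ∈ n.divisorsAntidiagonal, (1 - u x.2)^(μ x.1) :=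
        mul_le_mul_of_nonneg_left hT (le_of_lt h2pos)

lemma key_nat : ∀ m : ℕ, 3 ≤ m → 1048576 * 5 ^ m < 50625 * 16 ^ m := by
  intro m hm
  induction m, hm using Nat.le_induction with
  | base => norm_num
  | succ k hk ih =>
    have h16 : 0 < 16 ^ k := pow_pos (by norm_num) k
    simp only [pow_succ]
    nlinarith [ih]

lemma totient_ge_three {n : ℕ} (hn : 7 ≤ n) : 3 ≤ n.totient := by
  by_contra hcon
  push_neg at hcon
  have hn0 : n ≠ 0 := by omega
  have hd : ∀ d : ℕ, d ∣ n → d.totient ≤ 2 := by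
    intro d hdvd
    obtain ⟨m, rfl⟩ := hdvd
    have hsm := Nat.totient_super_multiplicative d m
    have hmpos : 0 < m := by
      rcases Nat.eq_zero_or_pos m with h | h
      · subst h; simp at hn
      · exact h
    have hm : 1 ≤ m.totient := Nat.totient_pos.mpr hmpos
    have hd1 : d.totient ≤ d.totient * m.totient := Nat.le_mul_of_pos_right _ hm
    omega
  have hp : ∀ p : ℕ, p.Prime → p ∣ n → p ≤ 3 := by
    intro p pp hdvd
    have := hd p hdvd
    rw [Nat.totient_prime pp] at this
    omega
  have h8 : ¬ (8 ∣ n) := by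
    intro hdvd
    have := hd 8 hdvd
    rw [show (8:ℕ).totient = 4 from by decide] at this
    omega
  have h9 : ¬ (9 ∣ n) := by
    intro hdvd
    have := hd 9 hdvd
    rw [show (9:ℕ).totient = 6 from by decide] at this
    omega
  -- decompose n = 2^a * 3^b * k
  set a := n.factorization 2 with ha
  set m := n / 2 ^ a with hm
  have hnm : 2 ^ a * m = n := Nat.ordProj_mul_ordCompl_eq_self n 2
  have h2m : ¬ (2 ∣ m) := Nat.not_dvd_ordCompl Nat.prime_two hn0
  have hm0 : m ≠ 0 := by intro h; rw [h, mul_zero] at hnm; omega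
  set b := m.factorization 3 with hb
  set k := m / 3 ^ b with hk
  have hmk : 3 ^ b * k = m := Nat.ordProj_mul_ordCompl_eq_self m 3
  have h3k : ¬ (3 ∣ k) := Nat.not_dvd_ordCompl Nat.prime_three hm0
  have hkm : k ∣ m := Nat.ordCompl_dvd m 3
  have h2k : ¬ (2 ∣ k) := fun h => h2m (h.trans hkm)
  have hk1 : k = 1 := by
    by_contra hk1
    obtain ⟨p, pp, pdvd⟩ := Nat.exists_prime_and_dvd hk1
    have hmn : m ∣ n := ⟨2 ^ a, by rw [← hnm, mul_comm]⟩
    have pdn : p ∣ n := pdvd.trans (hkm.trans hmn)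
    have := hp p pp pdn
    interval_cases p
    · exact absurd rfl (Nat.Prime.ne_zero pp)
    · exact absurd rfl (Nat.Prime.ne_one pp)
    · exact h2k pdvd
    · exact h3k pdvd
  have ha2 : a ≤ 2 := by
    by_contra hcon2
    apply h8
    have : (2:ℕ) ^ 3 ∣ 2 ^ a := pow_dvd_pow 2 (by omega)
    exact dvd_trans (by norm_num at this ⊢; exact this) ⟨m, hnm.symm⟩
  have hb1 : b ≤ 1 := by
    by_contra hcon2
    apply h9
    have h32 : (3:ℕ) ^ 2 ∣ 3 ^ b := pow_dvd_pow 3 (by omega)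
    have : (9:ℕ) ∣ m := dvd_trans (by norm_num at h32 ⊢; exact h32) ⟨k, hmk.symm⟩
    exact this.trans ⟨2 ^ a, by rw [← hnm, mul_comm]⟩
  have hdvd12 : n ∣ 12 := by
    have : n = 2 ^ a * 3 ^ b := by rw [hk1, mul_one] at hmk; rw [← hnm, hmk]
    rw [this, show (12:ℕ) = 2 ^ 2 * 3 ^ 1 from by norm_num]
    exact mul_dvd_mul (pow_dvd_pow 2 ha2) (pow_dvd_pow 3 hb1)
  have hle : n ≤ 12 := Nat.le_of_dvd (by norm_num) hdvd12
  interval_cases n <;> revert hdvd12 hcon <;> decide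

lemma rpow_lt_of (φv : ℕ) (b : ℝ) (hb : 0 < b) (h : (5:ℝ)^φv < b^4) :
    (5 : ℝ) ^ ((φv : ℝ) / 4) < b := by
  refine lt_of_pow_lt_pow_left₀ 4 hb.le ?_
  have key : ((5:ℝ) ^ ((φv:ℝ)/4)) ^ (4:ℕ) = 5 ^ φv := by
    rw [← Real.rpow_natCast ((5:ℝ) ^ ((φv:ℝ)/4)) 4, ← Real.rpow_mul (by norm_num)]
    rw [show ((4:ℕ):ℝ) = 4 from by norm_num, div_mul_cancel₀ _ (by norm_num : (4:ℝ) ≠ 0),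
      Real.rpow_natCast]
  rw [key]
  exact h

lemma F_one : F 1 = 1 := by norm_num [F, cyclotomic_one]
lemma F_two : F 2 = 3 := by norm_num [F, cyclotomic_two]
lemma F_three : F 3 = 7 := by norm_num [F, cyclotomic_three]

lemma F_four : F 4 = 5 := by
  have h := F_prod 4 (by norm_num)
  rw [show (4:ℕ).divisors = {1, 2, 4} from by decide] at h
  rw [Finset.prod_insert (by decide), Finset.prod_insert (by decide),
    Finset.prod_singleton, F_one, F_two] at h
  norm_num at h
  linarith

lemma F_six : F 6 = 3 := by
  have h := F_prod 6 (by norm_num)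
  rw [show (6:ℕ).divisors = {1, 2, 3, 6} from by decide] at h
  rw [Finset.prod_insert (by decide), Finset.prod_insert (by decide),
    Finset.prod_insert (by decide), Finset.prod_singleton, F_one, F_two, F_three] at h
  norm_num at h
  linarith

/-- For `n ≥ 2`, `|Φ_n(2)| > 5^{φ(n)/4}`. -/
theorem stmt_10 (n : ℕ) (hn : 2 ≤ n) :
    (5 : ℝ) ^ ((n.totient : ℝ) / 4) < |(((Polynomial.cyclotomic n ℤ).eval 2 : ℤ) : ℝ)| := by
  have hcast : (((Polynomial.cyclotomic n ℤ).eval 2 : ℤ) : ℝ) = F n := by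
    have := Polynomial.eval_intCast_map (Int.castRingHom ℝ) (cyclotomic n ℤ) 2
    rw [map_cyclotomic_int] at this
    simpa [F] using this.symm
  have hF1 := F_ge_one n
  rw [hcast, abs_of_pos (by linarith)]
  rcases eq_or_ne n 2 with rfl | h2
  · rw [F_two, Nat.totient_two]
    exact rpow_lt_of 1 3 (by norm_num) (by norm_num)
  rcases eq_or_ne n 3 with rfl | h3
  · rw [F_three, show Nat.totient 3 = 2 from by decide]
    exact rpow_lt_of 2 7 (by norm_num) (by norm_num)
  rcases eq_or_ne n 4 with rfl | h4
  · rw [F_four, show Nat.totient 4 = 2 from by decide]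
    exact rpow_lt_of 2 5 (by norm_num) (by norm_num)
  rcases eq_or_ne n 6 with rfl | h6
  · rw [F_six, show Nat.totient 6 = 2 from by decide]
    exact rpow_lt_of 2 3 (by norm_num) (by norm_num)
  -- general case : totient ≥ 3
  have hphi : 3 ≤ n.totient := by
    rcases eq_or_ne n 5 with rfl | h5
    · decide
    · exact totient_ge_three (by omega)
  apply rpow_lt_of n.totient (F n) (by linarith)
  have hlow := F_lower n (by omega)
  have hpow : ((15:ℝ)/32 * 2 ^ n.totient) ^ 4 ≤ (F n) ^ 4 :=
    pow_le_pow_left₀ (by positivity) hlow 4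
  refine lt_of_lt_of_le ?_ hpow
  have hk : (1048576:ℝ) * 5 ^ n.totient < 50625 * 16 ^ n.totient := by
    exact_mod_cast key_nat n.totient hphi
  have h16 : ((2:ℝ) ^ n.totient) ^ 4 = 16 ^ n.totient := by
    rw [← pow_mul, mul_comm, pow_mul]
    norm_num
  have hexp : ((15:ℝ)/32 * 2 ^ n.totient) ^ 4 = 50625/1048576 * 16 ^ n.totient := by
    rw [mul_pow, h16]
    norm_num
  rw [hexp]
  linarith
end

section
/- Let v be a discrete valuation, and suppose P is a point with v(t(P)) ≥ 1 and for all positive integers m, v(t(mP)) = v(t(P)) + v(m) (formal group law property). Let d₁ > d₂ ≥ 1 be integers, and suppose points P₁ = n₁P and P₂ = n₂P (with n₁, n₂ positive integers) satisfy d₁·(v(t(P)) + v(n₁)) = d₂·(v(t(P)) + v(n₂)). Then v(n₂) ≥ (d₁ - d₂)/d₂, and hence n₂ ≥ ℓ^{⌈d₁/d₂⌉ - 1} where ℓ is the prime with v(ℓ) = 1. -/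
/-- Valuation-theoretic core of the lower bound for non-integral points. Here `ℓ` is a
prime, `f m` plays the role of `v(t(mP))` for the `ℓ`-adic valuation `v` (normalised so
that `v(ℓ) = 1`), so that `f m = f 1 + v(m)` with `f 1 = v(t(P)) ≥ 1`. If `d₁ > d₂ ≥ 1`
and `d₁ f(n₁) = d₂ f(n₂)`, then `v(n₂) ≥ (d₁-d₂)/d₂` and hence `n₂ ≥ ℓ^{⌈d₁/d₂⌉-1}`. -/
theorem stmt_17 (ℓ : ℕ) (hℓ : ℓ.Prime) (f : ℕ → ℤ) (h1 : 1 ≤ f 1)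
    (hf : ∀ m : ℕ, 0 < m → f m = f 1 + padicValNat ℓ m)
    (d₁ d₂ n₁ n₂ : ℕ) (hd₂ : 1 ≤ d₂) (hd : d₂ < d₁) (hn₁ : 0 < n₁) (hn₂ : 0 < n₂)
    (heq : (d₁ : ℤ) * f n₁ = (d₂ : ℤ) * f n₂) :
    ((d₁ : ℚ) - (d₂ : ℚ)) / (d₂ : ℚ) ≤ (padicValNat ℓ n₂ : ℚ) ∧
      ℓ ^ (⌈(d₁ : ℚ) / (d₂ : ℚ)⌉₊ - 1) ≤ n₂ := by
  set v₁ : ℤ := (padicValNat ℓ n₁ : ℤ) with hv₁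
  set v₂ : ℤ := (padicValNat ℓ n₂ : ℤ) with hv₂
  rw [hf n₁ hn₁, hf n₂ hn₂] at heq
  have hv₁0 : 0 ≤ v₁ := Int.natCast_nonneg _
  have key : (d₁ : ℤ) - d₂ ≤ (d₂ : ℤ) * v₂ := by
    have hdd : ((d₁ : ℤ) - d₂) * 1 ≤ ((d₁ : ℤ) - d₂) * f 1 := by
      apply mul_le_mul_of_nonneg_left h1
      have : (d₂ : ℤ) < d₁ := by exact_mod_cast hd
      omega
    have h2 : ((d₁ : ℤ) - d₂) * f 1 ≤ (d₂ : ℤ) * v₂ := by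
      have : 0 ≤ (d₁ : ℤ) * v₁ := mul_nonneg (Int.natCast_nonneg _) hv₁0
      nlinarith [heq]
    linarith
  have hd₂q : (0 : ℚ) < (d₂ : ℚ) := by exact_mod_cast hd₂
  have hfirst : ((d₁ : ℚ) - (d₂ : ℚ)) / (d₂ : ℚ) ≤ (padicValNat ℓ n₂ : ℚ) := by
    have key' : ((d₁ : ℚ)) - d₂ ≤ (d₂ : ℚ) * (padicValNat ℓ n₂) := by
      have h := key
      rw [hv₂] at h
      have h' : ((d₁ : ℤ) : ℚ) - ((d₂ : ℤ) : ℚ) ≤ ((d₂ : ℤ) : ℚ) * (((padicValNat ℓ n₂ : ℤ)) : ℚ) := by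
        exact_mod_cast sub_le_iff_le_add.mpr (by linarith : (d₁ : ℤ) ≤ d₂ * (padicValNat ℓ n₂ : ℤ) + d₂)
      simpa only [Int.cast_natCast] using h'
    rw [div_le_iff₀ hd₂q]
    linarith
  refine ⟨hfirst, ?_⟩
  have hceil : ⌈(d₁ : ℚ) / (d₂ : ℚ)⌉₊ - 1 ≤ padicValNat ℓ n₂ := by
    have heqq : (d₁ : ℚ) / d₂ = ((d₁ : ℚ) - d₂) / d₂ + 1 := by
      field_simp
      ring
    have hnn : (0 : ℚ) ≤ ((d₁ : ℚ) - d₂) / d₂ := by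
      apply div_nonneg _ hd₂q.le
      have : (d₂ : ℚ) < d₁ := by exact_mod_cast hd
      linarith
    rw [heqq, Nat.ceil_add_one hnn]
    simp only [Nat.add_sub_cancel]
    exact Nat.ceil_le.mpr hfirst
  calc ℓ ^ (⌈(d₁ : ℚ) / (d₂ : ℚ)⌉₊ - 1) ≤ ℓ ^ padicValNat ℓ n₂ :=
        Nat.pow_le_pow_right hℓ.pos hceil
    _ ≤ n₂ := Nat.le_of_dvd hn₂ (pow_padicValNat_dvd)
end

section
/- Let k be a field of characteristic 0, and A, B ∈ k with 4A³ + 27B² ≠ 0. Suppose there is no nonconstant morphism ℙ¹ → E over k̄, where E is the elliptic curve y² = x³ + Ax + B (equivalently, E has genus 1). Let p(X) ∈ k[X] be a nonconstant polynomial. Then the polynomial Z³ + A·Z + B - p(X)² is irreducible in k(X)[Z]. -/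
open Polynomial

/-- Let `k` be a field of characteristic `0`, `A, B ∈ k` with `4A³ + 27B² ≠ 0`, and
suppose there is no nonconstant morphism `ℙ¹ → E` over the algebraic closure of `k`
(expressed as: every rational-function solution `(f, g)` of `g² = f³ + Af + B` over the
algebraic closure is constant). Then for every nonconstant `p(X) ∈ k[X]`, the polynomial
`Z³ + AZ + B - p(X)²` is irreducible in `k(X)[Z]`. -/
theorem stmt_18 {k : Type*} [Field k] [CharZero k] (A B : k)
    (hdisc : 4 * A ^ 3 + 27 * B ^ 2 ≠ 0)
    (hE : ∀ f g : RatFunc (AlgebraicClosure k),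
      g ^ 2 = f ^ 3 + RatFunc.C (algebraMap k (AlgebraicClosure k) A) * f +
          RatFunc.C (algebraMap k (AlgebraicClosure k) B) →
        (∃ c, f = RatFunc.C c) ∧ ∃ c, g = RatFunc.C c)
    (p : Polynomial k) (hp : 0 < p.natDegree) :
    Irreducible ((Polynomial.X : Polynomial (RatFunc k)) ^ 3 +
      Polynomial.C (RatFunc.C A) * Polynomial.X +
      Polynomial.C (RatFunc.C B - (algebraMap (Polynomial k) (RatFunc k) p) ^ 2)) := by
  set q : Polynomial (RatFunc k) :=
    (Polynomial.X : Polynomial (RatFunc k)) ^ 3 +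
      Polynomial.C (RatFunc.C A) * Polynomial.X +
      Polynomial.C (RatFunc.C B - (algebraMap (Polynomial k) (RatFunc k) p) ^ 2) with hq
  have hdeg : q.natDegree = 3 := by
    rw [hq]; compute_degree!
  rw [Polynomial.irreducible_iff_roots_eq_zero_of_degree_le_three (by omega) (by omega)]
  rw [Multiset.eq_zero_iff_forall_notMem]
  intro r hr
  have hq0 : q ≠ 0 := fun h => by simp [h] at hdeg
  have hroot : q.eval r = 0 := (Polynomial.mem_roots hq0).mp hr
  have hroot' : r ^ 3 + RatFunc.C A * r + (RatFunc.C B -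
      (algebraMap (Polynomial k) (RatFunc k) p) ^ 2) = 0 := by
    simpa [hq] using hroot
  -- build the map RatFunc k →+* RatFunc (AlgebraicClosure k)
  set i : k →+* AlgebraicClosure k := algebraMap k (AlgebraicClosure k) with hi
  set ψ : Polynomial k →+* Polynomial (AlgebraicClosure k) := Polynomial.mapRingHom i with hψ
  have hψinj : Function.Injective ψ :=
    Polynomial.map_injective i (algebraMap k (AlgebraicClosure k)).injective
  have hmono : nonZeroDivisors (Polynomial k) ≤ (nonZeroDivisors (Polynomial (AlgebraicClosure k))).comap ψ := by
    intro x hx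
    simp only [Submonoid.mem_comap]
    rw [mem_nonZeroDivisors_iff_ne_zero] at hx ⊢
    exact fun h => hx (hψinj (by simpa using h))
  set Φ : RatFunc k →+* RatFunc (AlgebraicClosure k) := RatFunc.mapRingHom ψ hmono with hΦ
  have key : ∀ s : Polynomial k,
      Φ (algebraMap (Polynomial k) (RatFunc k) s) =
        algebraMap (Polynomial (AlgebraicClosure k)) (RatFunc (AlgebraicClosure k)) (s.map i) := by
    intro s
    have h1 := RatFunc.map_apply_div ψ hmono s 1
    simp only [map_one, div_one] at h1
    rw [hΦ, RatFunc.coe_mapRingHom_eq_coe_map]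
    simpa [hψ] using h1
  have keyC : ∀ a : k, Φ (RatFunc.C a) = RatFunc.C (i a) := by
    intro a
    have := key (Polynomial.C a)
    rwa [RatFunc.algebraMap_C, Polynomial.map_C, RatFunc.algebraMap_C] at this
  -- apply Φ to the root equation
  have heq : (Φ (algebraMap (Polynomial k) (RatFunc k) p)) ^ 2 =
      (Φ r) ^ 3 + RatFunc.C (i A) * Φ r + RatFunc.C (i B) := by
    have := congrArg Φ hroot'
    simp only [map_add, map_sub, map_pow, map_mul, map_zero, keyC] at this
    linear_combination -this
  rw [key p] at heq
  obtain ⟨-, c, hc⟩ := hE (Φ r) _ heq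
  -- g = algebraMap (p.map i) is constant, contradiction
  rw [show (RatFunc.C c : RatFunc (AlgebraicClosure k)) =
      algebraMap (Polynomial (AlgebraicClosure k)) _ (Polynomial.C c) from
      (RatFunc.algebraMap_C c).symm] at hc
  have hinj : Function.Injective
      (algebraMap (Polynomial (AlgebraicClosure k)) (RatFunc (AlgebraicClosure k))) :=
    IsFractionRing.injective _ _
  have : p.map i = Polynomial.C c := hinj hc
  have : (p.map i).natDegree = 0 := by rw [this]; simp
  rw [Polynomial.natDegree_map] at this
  omega
end

section
/- Assume A and B are rational integers such that -3A and -3·Δ are not squares in ℚ, where Δ = -16(4A³ + 27B²) ≠ 0. Then the quartic polynomial g(T) = 27T⁴ - 54BT² + 4A³ + 27B² is irreducible over ℚ; in particular its four roots are distinct and each has degree 4 over ℚ. -/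
open Polynomial

private lemma coeff_mul_expand (a b : ℚ[X]) (n : ℕ) :
    (a*b).coeff n = ∑ i ∈ Finset.range (n+1), a.coeff i * b.coeff (n - i) := by
  rw [coeff_mul, Finset.Nat.sum_antidiagonal_eq_sum_range_succ_mk]

private lemma biquad_irred (p c : ℚ) (hd : ¬ IsSquare (p^2 - 4*c)) (hc : ¬ IsSquare c) :
    Irreducible ((X:ℚ[X])^4 + C p * X^2 + C c) := by
  set h : ℚ[X] := (X:ℚ[X])^4 + C p * X^2 + C c with hh
  have hdeg : h.natDegree = 4 := by rw [hh]; compute_degree!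
  have hmon : h.Monic := by rw [Monic, hh]; monicity!
  have hroot : ∀ r : ℚ, ¬ h.IsRoot r := by
    intro r hr
    apply hd
    have : r^4 + p * r^2 + c = 0 := by simpa [hh, IsRoot] using hr
    exact ⟨2*r^2 + p, by nlinarith [this]⟩
  have degpos : ∀ q : ℚ[X], q ≠ 0 → ¬ IsUnit q → 1 ≤ q.natDegree := by
    intro q hq0 hqu
    rcases Nat.eq_zero_or_pos q.natDegree with h0 | h1
    · exfalso
      apply hqu
      rw [eq_C_of_natDegree_eq_zero h0]
      refine isUnit_C.mpr (isUnit_iff_ne_zero.mpr ?_)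
      intro hz
      exact hq0 (by rw [eq_C_of_natDegree_eq_zero h0, hz, map_zero])
    · exact h1
  constructor
  · intro hu
    have := natDegree_eq_zero_of_isUnit hu
    omega
  · rintro a b hab
    by_contra hcon
    push_neg at hcon
    obtain ⟨hua, hub⟩ := hcon
    have ha0 : a ≠ 0 := by rintro rfl; exact hmon.ne_zero (by simpa using hab)
    have hb0 : b ≠ 0 := by rintro rfl; exact hmon.ne_zero (by simpa using hab)
    have hsum : a.natDegree + b.natDegree = 4 := by
      rw [← hdeg, hab, natDegree_mul ha0 hb0]
    have ha1 := degpos a ha0 hua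
    have hb1 := degpos b hb0 hub
    -- a root from a degree-1 factor
    have lin : ∀ q : ℚ[X], q ∣ h → q ≠ 0 → q.natDegree = 1 → False := by
      intro q hq hq0 hq1
      have hq' : q = C (q.coeff 1) * X + C (q.coeff 0) :=
        eq_X_add_C_of_natDegree_le_one (by omega)
      have hc1 : q.coeff 1 ≠ 0 := by
        intro h0
        have h2 := hq'
        rw [h0, map_zero, zero_mul, zero_add] at h2
        rw [h2, natDegree_C] at hq1
        omega
      have hqe : q.eval (-(q.coeff 0)/q.coeff 1) = 0 := by
        conv_lhs => rw [hq']
        simp only [eval_add, eval_mul, eval_C, eval_X]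
        rw [← hq']
        field_simp
        ring
      obtain ⟨k, hk⟩ := hq
      have : h.IsRoot (-(q.coeff 0)/q.coeff 1) := by
        rw [IsRoot, hk, eval_mul, hqe, zero_mul]
      exact hroot _ this
    -- quadratic monic factorization is impossible
    have quad : ∀ a b : ℚ[X], h = a * b → a.Monic → b.Monic →
        a.natDegree = 2 → b.natDegree = 2 → False := by
      intro a b hab ham hbm ha2 hb2
      have ha2' : a.coeff 2 = 1 := by rw [← ha2]; exact ham
      have hb2' : b.coeff 2 = 1 := by rw [← hb2]; exact hbm
      have ha3 : a.coeff 3 = 0 := coeff_eq_zero_of_natDegree_lt (by omega)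
      have hb3 : b.coeff 3 = 0 := coeff_eq_zero_of_natDegree_lt (by omega)
      have E3 : b.coeff 1 + a.coeff 1 = 0 := by
        have h3 := congrArg (fun q => Polynomial.coeff q 3) hab
        simp only [coeff_mul_expand, Finset.sum_range_succ, Finset.sum_range_zero] at h3
        simp only [hh, coeff_add, coeff_X_pow, coeff_C_mul, coeff_C, ha2', hb2', ha3, hb3] at h3
        norm_num at h3
        linarith
      have E2 : b.coeff 0 + a.coeff 1 * b.coeff 1 + a.coeff 0 = p := by
        have h2 := congrArg (fun q => Polynomial.coeff q 2) hab
        simp only [coeff_mul_expand, Finset.sum_range_succ, Finset.sum_range_zero] at h2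
        simp only [hh, coeff_add, coeff_X_pow, coeff_C_mul, coeff_C, ha2', hb2'] at h2
        norm_num at h2
        linarith
      have E1 : a.coeff 1 * b.coeff 0 + a.coeff 0 * b.coeff 1 = 0 := by
        have h1 := congrArg (fun q => Polynomial.coeff q 1) hab
        simp only [coeff_mul_expand, Finset.sum_range_succ, Finset.sum_range_zero] at h1
        simp only [hh, coeff_add, coeff_X_pow, coeff_C_mul, coeff_C] at h1
        norm_num at h1
        linarith
      have E0 : a.coeff 0 * b.coeff 0 = c := by
        have h0 := congrArg (fun q => Polynomial.coeff q 0) hab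
        simp only [coeff_mul_expand, Finset.sum_range_succ, Finset.sum_range_zero] at h0
        simp only [hh, coeff_add, coeff_X_pow, coeff_C_mul, coeff_C] at h0
        norm_num at h0
        linarith
      have key : a.coeff 1 * (b.coeff 0 - a.coeff 0) = 0 := by
        linear_combination E1 - a.coeff 0 * E3
      rcases mul_eq_zero.mp key with hs | hvt
      · apply hd
        have hp : b.coeff 0 + a.coeff 0 = p := by
          linear_combination E2 - b.coeff 1 * hs
        exact ⟨a.coeff 0 - b.coeff 0, by
          linear_combination (-(a.coeff 0 + b.coeff 0 + p)) * hp + 4 * E0⟩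
      · apply hc
        have hv : b.coeff 0 = a.coeff 0 := by linarith
        exact ⟨a.coeff 0, by rw [← E0, hv]⟩
    have ha3' : a.natDegree ≤ 3 := by omega
    interval_cases hda : a.natDegree
    · exact lin a ⟨b, hab⟩ ha0 hda
    · have hdb : b.natDegree = 2 := by omega
      have hla : a.leadingCoeff ≠ 0 := leadingCoeff_ne_zero.mpr ha0
      have hlb : b.leadingCoeff ≠ 0 := leadingCoeff_ne_zero.mpr hb0
      refine quad (C a.leadingCoeff⁻¹ * a) (C a.leadingCoeff * b) ?_ ?_ ?_ ?_ ?_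
      · rw [hab, mul_mul_mul_comm, ← map_mul, inv_mul_cancel₀ hla, map_one, one_mul]
      · show leadingCoeff _ = 1
        rw [leadingCoeff_mul, leadingCoeff_C, inv_mul_cancel₀ hla]
      · show leadingCoeff _ = 1
        rw [leadingCoeff_mul, leadingCoeff_C]
        have := hmon
        rw [Monic, hab, leadingCoeff_mul] at this
        exact this
      · rw [natDegree_mul (by simp [hla]) ha0, natDegree_C]; omega
      · rw [natDegree_mul (by simp [hla]) hb0, natDegree_C]; omega
    · exact lin b ⟨a, by rw [hab, mul_comm]⟩ hb0 (by omega)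



/-- Kappe–Warren irreducibility criterion applied in the genus computation: if `A, B` are
rational integers with `Δ = -16(4A³+27B²) ≠ 0` such that neither `-3A` nor `-3Δ` is a
square in `ℚ`, then `g(T) = 27T⁴ - 54BT² + 4A³ + 27B²` is irreducible over `ℚ`. -/
theorem stmt_19 (A B : ℤ) (hΔ : (-16 : ℤ) * (4 * A ^ 3 + 27 * B ^ 2) ≠ 0)
    (hA : ¬ IsSquare ((-3 * A : ℤ) : ℚ))
    (hD : ¬ IsSquare (((-3 * (-16 * (4 * A ^ 3 + 27 * B ^ 2)) : ℤ)) : ℚ)) :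
    Irreducible ((27 : Polynomial ℚ) * Polynomial.X ^ 4 -
      54 * Polynomial.C (B : ℚ) * Polynomial.X ^ 2 +
      Polynomial.C ((4 * A ^ 3 + 27 * B ^ 2 : ℤ) : ℚ)) := by
  set q : ℚ := ((4 * A ^ 3 + 27 * B ^ 2 : ℤ) : ℚ) with hq
  set p : ℚ := -2 * (B : ℚ) with hp
  set c : ℚ := q / 27 with hcdef
  have hqval : q = 4 * (A:ℚ)^3 + 27 * (B:ℚ)^2 := by rw [hq]; push_cast; ring
  have hd : ¬ IsSquare (p^2 - 4*c) := by
    rintro ⟨e, he⟩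
    apply hA
    rw [hp, hcdef, hqval] at he
    by_cases hA0 : (A:ℚ) = 0
    · exact ⟨0, by push_cast; rw [hA0]; ring⟩
    · refine ⟨9 * e / (4 * A), ?_⟩
      push_cast
      field_simp
      field_simp at he
      linear_combination (3 : ℚ) * he
  have hc : ¬ IsSquare c := by
    rintro ⟨e, he⟩
    apply hD
    refine ⟨36 * e, ?_⟩
    rw [hcdef, hqval] at he
    push_cast
    linear_combination (1296 : ℚ) * he
  have key : (27 : Polynomial ℚ) * Polynomial.X ^ 4 -
      54 * Polynomial.C (B : ℚ) * Polynomial.X ^ 2 +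
      Polynomial.C ((4 * A ^ 3 + 27 * B ^ 2 : ℤ) : ℚ) =
      Polynomial.C 27 * ((Polynomial.X : ℚ[X])^4 + Polynomial.C p * Polynomial.X^2 + Polynomial.C c) := by
    have h1 : Polynomial.C ((4 * A ^ 3 + 27 * B ^ 2 : ℤ) : ℚ) = Polynomial.C (27:ℚ) * Polynomial.C c := by
      rw [← Polynomial.C_mul]
      congr 1
      rw [hcdef]; ring
    have h2 : Polynomial.C p = Polynomial.C (-2:ℚ) * Polynomial.C (B:ℚ) := by
      rw [← Polynomial.C_mul, hp]
    have h3 : (27 : ℚ[X]) = Polynomial.C (27:ℚ) := (map_ofNat Polynomial.C 27).symm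
    have h4 : (54 : ℚ[X]) = Polynomial.C (54:ℚ) := (map_ofNat Polynomial.C 54).symm
    rw [h1, h2, h3, h4]
    rw [show Polynomial.C (54:ℚ) = Polynomial.C (27:ℚ) * Polynomial.C (2:ℚ) by rw [← Polynomial.C_mul]; norm_num,
        show Polynomial.C (-2:ℚ) = -Polynomial.C (2:ℚ) by rw [← Polynomial.C_neg]]
    ring
  rw [key, irreducible_isUnit_mul (Polynomial.isUnit_C.mpr (isUnit_iff_ne_zero.mpr (by norm_num)))]
  exact biquad_irred p c hd hc
end
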